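/- For all θ, η ∈ ℝ with θ − η ∉ 2πℤ, the normalized chord outer product of the unit circle equals M(θ,η): ((X⋆(θ)−X⋆(η)) ⊗ (X⋆(θ)−X⋆(η))) / |X⋆(θ)−X⋆(η)|² = M(θ,η). Moreover, for every θ ∈ ℝ, (1/π) ∫_{−π}^{π} M(θ,η) dη = I, the 2×2 identity matrix. -/

import Mathlib

open Real intervalIntegral

/-- The counterclockwise unit-circle parametrization `X⋆(θ) = (cos θ, sin θ)`. -/
noncomputable def Xstar (θ : ℝ) : Fin 2 → ℝ := ![Real.cos θ, Real.sin θ]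

/-- The matrix kernel
`M(θ,η) = (1/2)·[[1−cos(θ+η), −sin(θ+η)], [−sin(θ+η), 1+cos(θ+η)]]`. -/
noncomputable def Mmat (θ η : ℝ) : Matrix (Fin 2) (Fin 2) ℝ :=
  (1 / 2 : ℝ) •
    !![1 - Real.cos (θ + η), -Real.sin (θ + η);
       -Real.sin (θ + η), 1 + Real.cos (θ + η)]

/-- For `θ − η ∉ 2πℤ`, the normalized chord outer product of the unit circle equals
`M(θ,η)`; moreover, for every `θ`, `(1/π)∫_{−π}^{π} M(θ,η) dη = I`. -/
theorem chord_outer_product_eq_Mmat_and_mean :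
    (∀ θ η : ℝ, (∀ m : ℤ, θ - η ≠ 2 * π * m) →
      (Matrix.of fun i j =>
          ((Xstar θ - Xstar η) i * (Xstar θ - Xstar η) j) /
            ((Xstar θ - Xstar η) 0 ^ 2 + (Xstar θ - Xstar η) 1 ^ 2)) = Mmat θ η) ∧
    (∀ θ : ℝ,
      (1 / π) • (Matrix.of fun i j => ∫ η in (-π)..π, Mmat θ η i j) =
        (1 : Matrix (Fin 2) (Fin 2) ℝ)) := by
  constructor
  · intro θ η hm
    have hsne : Real.sin ((θ - η) / 2) ≠ 0 := by
      intro h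
      rcases Real.sin_eq_zero_iff.mp h with ⟨m, hm'⟩
      exact hm m (by linarith)
    have hc : Real.cos θ - Real.cos η
        = -2 * Real.sin ((θ + η) / 2) * Real.sin ((θ - η) / 2) := Real.cos_sub_cos θ η
    have hs : Real.sin θ - Real.sin η
        = 2 * Real.sin ((θ - η) / 2) * Real.cos ((θ + η) / 2) := Real.sin_sub_sin θ η
    have hpy : Real.sin ((θ + η) / 2) ^ 2 + Real.cos ((θ + η) / 2) ^ 2 = 1 :=
      Real.sin_sq_add_cos_sq _
    have hden : (Real.cos θ - Real.cos η) ^ 2 + (Real.sin θ - Real.sin η) ^ 2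
        = 4 * Real.sin ((θ - η) / 2) ^ 2 := by
      rw [hc, hs]; nlinarith [hpy]
    have h2A : θ + η = 2 * ((θ + η) / 2) := by ring
    have hcos2 : Real.cos (θ + η) = 1 - 2 * Real.sin ((θ + η) / 2) ^ 2 := by
      have h := Real.cos_two_mul ((θ + η) / 2)
      rw [← h2A] at h; rw [h]; nlinarith [hpy]
    have hsin2 : Real.sin (θ + η)
        = 2 * Real.sin ((θ + η) / 2) * Real.cos ((θ + η) / 2) := by
      have h := Real.sin_two_mul ((θ + η) / 2)
      rw [← h2A] at h; exact h
    ext i j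
    fin_cases i <;> fin_cases j <;>
      · simp only [Matrix.of_apply, Mmat, Matrix.smul_apply, smul_eq_mul, Xstar,
          Pi.sub_apply, Matrix.cons_val_zero, Matrix.cons_val_one, Matrix.head_cons,
          Matrix.cons_val', Matrix.empty_val', Matrix.cons_val_fin_one, Fin.isValue,
          Fin.zero_eta, Fin.mk_one, Matrix.vecHead, Matrix.vecTail]
        rw [hden]
        simp only [hc, hs, hcos2, hsin2]
        have hdne : (4 : ℝ) * Real.sin ((θ - η) / 2) ^ 2 ≠ 0 := by positivity
        rw [div_eq_iff hdne]
        set sA := Real.sin ((θ + η) / 2) with hsA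
        set cA := Real.cos ((θ + η) / 2) with hcA
        set sB := Real.sin ((θ - η) / 2) with hsB
        clear_value sA cA sB
        first
        | ring1
        | linear_combination (4 * sB ^ 2) * hpy
  · intro θ
    have hcI : (∫ η in (-π)..π, Real.cos (θ + η)) = 0 := by
      rw [integral_comp_add_left (fun x => Real.cos x) θ, integral_cos]
      simp [Real.sin_add, Real.sin_sub]
    have hsI : (∫ η in (-π)..π, Real.sin (θ + η)) = 0 := by
      rw [integral_comp_add_left (fun x => Real.sin x) θ, integral_sin]
      simp [Real.cos_add, Real.cos_sub]
    have hic : IntervalIntegrable (fun η => Real.cos (θ + η)) MeasureTheory.volume (-π) π :=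
      (Real.continuous_cos.comp (continuous_const.add continuous_id)).intervalIntegrable _ _
    have h1 : IntervalIntegrable (fun _ : ℝ => (1:ℝ)) MeasureTheory.volume (-π) π :=
      intervalIntegrable_const
    have hM00 : ∀ η : ℝ, Mmat θ η 0 0 = 1/2 * (1 - Real.cos (θ + η)) := fun η => by
      simp [Mmat]
    have hM01 : ∀ η : ℝ, Mmat θ η 0 1 = 1/2 * (-Real.sin (θ + η)) := fun η => by
      simp [Mmat]
    have hM10 : ∀ η : ℝ, Mmat θ η 1 0 = 1/2 * (-Real.sin (θ + η)) := fun η => by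
      simp [Mmat]
    have hM11 : ∀ η : ℝ, Mmat θ η 1 1 = 1/2 * (1 + Real.cos (θ + η)) := fun η => by
      simp [Mmat]
    have i00 : (∫ η in (-π)..π, Mmat θ η 0 0) = π := by
      simp only [hM00]
      rw [integral_const_mul, integral_sub h1 hic, hcI, integral_const]
      simp only [smul_eq_mul]
      field_simp
      ring
    have i01 : (∫ η in (-π)..π, Mmat θ η 0 1) = 0 := by
      simp only [hM01]
      rw [integral_const_mul, integral_neg, hsI, neg_zero, mul_zero]
    have i10 : (∫ η in (-π)..π, Mmat θ η 1 0) = 0 := by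
      simp only [hM10]
      rw [integral_const_mul, integral_neg, hsI, neg_zero, mul_zero]
    have i11 : (∫ η in (-π)..π, Mmat θ η 1 1) = π := by
      simp only [hM11]
      rw [integral_const_mul, integral_add h1 hic, hcI, integral_const]
      simp only [smul_eq_mul]
      field_simp
      ring
    have hπ : π ≠ 0 := Real.pi_ne_zero
    ext i j
    fin_cases i <;> fin_cases j <;>
      simp [Matrix.one_apply, i00, i01, i10, i11, hπ]
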